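/- Coupon-collector lower tail: let v_1, ..., v_m be independent uniform samples from [n−1] and R_m = {v_1, ..., v_m} the set of distinct values. Then for any s > 0, E[exp(−s|R_m|)] ≤ e^{−ms} ∏_{i=1}^{m−1}(1 + i(e^s − 1)/(n−1)), and consequently for every 1 ≤ j ≤ m, Pr[|R_m| ≤ m − j] ≤ (e m² / (2 j n))^j. -/

import Mathlib

open Finset

lemma image_cons {m N : ℕ} (a : Fin N) (g : Fin m → Fin N) :
    (univ.image (Fin.cons a g : Fin (m+1) → Fin N)) = insert a (univ.image g) := by
  ext x
  simp [Fin.exists_fin_succ, eq_comm]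

lemma key_sum (N : ℕ) (hN : 1 ≤ N) (s : ℝ) (hs : 0 ≤ s) : ∀ m : ℕ,
    ∑ f : Fin m → Fin N, Real.exp (-s * ((univ.image f).card : ℝ)) ≤
      (N:ℝ)^m * (Real.exp (-(m:ℝ)*s) *
        ∏ i ∈ range m, (1 + (i:ℝ)*(Real.exp s - 1)/(N:ℝ))) := by
  intro m
  induction m with
  | zero => simp
  | succ m ih =>
    have hNpos : (0:ℝ) < N := by exact_mod_cast hN
    have hes : (1:ℝ) ≤ Real.exp s := by
      simpa using Real.exp_le_exp.2 hs
    have hrw : ∑ f : Fin (m+1) → Fin N, Real.exp (-s * ((univ.image f).card : ℝ))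
        = ∑ g : Fin m → Fin N, ∑ a : Fin N,
            Real.exp (-s * ((insert a (univ.image g)).card : ℝ)) := by
      have := Fintype.sum_equiv (Fin.consEquiv (fun _ : Fin (m+1) => Fin N))
        (fun p : Fin N × (Fin m → Fin N) =>
          Real.exp (-s * ((insert p.1 (univ.image p.2)).card : ℝ)))
        (fun f : Fin (m+1) → Fin N => Real.exp (-s * ((univ.image f).card : ℝ)))
        (fun p => by simp [Fin.consEquiv, image_cons])
      rw [← this, Fintype.sum_prod_type, Finset.sum_comm]
    rw [hrw]
    -- inner sum bound
    have inner : ∀ g : Fin m → Fin N,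
        ∑ a : Fin N, Real.exp (-s * ((insert a (univ.image g)).card : ℝ))
          ≤ Real.exp (-s * ((univ.image g).card : ℝ)) *
            ((N:ℝ) * Real.exp (-s) * (1 + (m:ℝ)*(Real.exp s - 1)/(N:ℝ))) := by
      intro g
      set t := univ.image g with ht
      have hcard : (t.card : ℝ) ≤ m := by
        exact_mod_cast (Finset.card_image_le.trans (by simp))
      have hsplit : ∑ a : Fin N, Real.exp (-s * ((insert a t).card : ℝ))
          = (t.card : ℝ) * Real.exp (-s * (t.card : ℝ))
            + ((N:ℝ) - t.card) * Real.exp (-s * ((t.card : ℝ) + 1)) := by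
        have : ∀ a : Fin N, Real.exp (-s * ((insert a t).card : ℝ))
            = if a ∈ t then Real.exp (-s * (t.card : ℝ))
              else Real.exp (-s * ((t.card : ℝ) + 1)) := by
          intro a
          by_cases h : a ∈ t
          · simp [h, Finset.insert_eq_self.2 h]
          · rw [if_neg h, Finset.card_insert_of_notMem h]
            push_cast
            ring_nf
        rw [Finset.sum_congr rfl (fun a _ => this a), Finset.sum_ite,
          Finset.sum_const, Finset.sum_const, Finset.filter_mem_eq_inter,
          Finset.univ_inter, ← Finset.sdiff_eq_filter]
        have hsub : ((univ \ t).card : ℝ) = (N:ℝ) - t.card := by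
          rw [Finset.card_sdiff_of_subset (Finset.subset_univ t)]
          have h2 : t.card ≤ N := by
            simpa using Finset.card_le_card (Finset.subset_univ t)
          rw [Finset.card_univ, Fintype.card_fin, Nat.cast_sub h2]
        rw [nsmul_eq_mul, nsmul_eq_mul, hsub]
      rw [hsplit]
      have hkey : (t.card : ℝ) * Real.exp (-s * (t.card : ℝ))
            + ((N:ℝ) - t.card) * Real.exp (-s * ((t.card : ℝ) + 1))
          ≤ Real.exp (-s * (t.card : ℝ)) *
            ((N:ℝ) * Real.exp (-s) * (1 + (m:ℝ)*(Real.exp s - 1)/(N:ℝ))) := by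
        have hexp : Real.exp (-s * ((t.card : ℝ) + 1)) = Real.exp (-s * t.card) * Real.exp (-s) := by
          rw [← Real.exp_add]; ring_nf
        rw [hexp]
        have hE : Real.exp (-s) * Real.exp s = 1 := by
          rw [← Real.exp_add]; simp
        have hcN : (t.card : ℝ) ≤ N := by
          have := Finset.card_le_card (Finset.subset_univ t)
          simp only [Finset.card_univ, Fintype.card_fin] at this
          exact_mod_cast this
        have hpos : (0:ℝ) < Real.exp (-s * t.card) := Real.exp_pos _
        have hpos2 : (0:ℝ) < Real.exp (-s) := Real.exp_pos _
        -- reduce to: c + (N - c) * e^{-s} ≤ e^{-s} * (N + m (e^s - 1))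
        have hfield : (N:ℝ) * Real.exp (-s) * (1 + (m:ℝ)*(Real.exp s - 1)/(N:ℝ))
            = Real.exp (-s) * ((N:ℝ) + (m:ℝ)*(Real.exp s - 1)) := by
          field_simp
        rw [hfield]
        have hmain : (t.card:ℝ) + ((N:ℝ) - t.card) * Real.exp (-s)
            ≤ Real.exp (-s) * ((N:ℝ) + (m:ℝ)*(Real.exp s - 1)) := by
          have h1 : Real.exp (-s) * ((N:ℝ) + (t.card:ℝ)*(Real.exp s - 1))
              ≤ Real.exp (-s) * ((N:ℝ) + (m:ℝ)*(Real.exp s - 1)) := by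
            apply mul_le_mul_of_nonneg_left _ hpos2.le
            nlinarith
          refine le_trans (le_of_eq ?_) h1
          nlinarith [hE]
        nlinarith [hpos, hmain]
      exact hkey
    calc ∑ g : Fin m → Fin N, ∑ a : Fin N, Real.exp (-s * ((insert a (univ.image g)).card : ℝ))
        ≤ ∑ g : Fin m → Fin N, Real.exp (-s * ((univ.image g).card : ℝ)) *
            ((N:ℝ) * Real.exp (-s) * (1 + (m:ℝ)*(Real.exp s - 1)/(N:ℝ))) :=
          Finset.sum_le_sum (fun g _ => inner g)
      _ = (∑ g : Fin m → Fin N, Real.exp (-s * ((univ.image g).card : ℝ))) *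
            ((N:ℝ) * Real.exp (-s) * (1 + (m:ℝ)*(Real.exp s - 1)/(N:ℝ))) := by
          rw [← Finset.sum_mul]
      _ ≤ ((N:ℝ)^m * (Real.exp (-(m:ℝ)*s) *
            ∏ i ∈ range m, (1 + (i:ℝ)*(Real.exp s - 1)/(N:ℝ)))) *
            ((N:ℝ) * Real.exp (-s) * (1 + (m:ℝ)*(Real.exp s - 1)/(N:ℝ))) := by
          apply mul_le_mul_of_nonneg_right ih
          have h0 : (0:ℝ) ≤ (m:ℝ)*(Real.exp s - 1)/(N:ℝ) := by
            apply div_nonneg (mul_nonneg (by positivity) (by linarith)) hNpos.le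
          have h1 : (0:ℝ) ≤ 1 + (m:ℝ)*(Real.exp s - 1)/(N:ℝ) := by linarith
          have h2 : (0:ℝ) < (N:ℝ) * Real.exp (-s) := by positivity
          nlinarith
      _ = (N:ℝ)^(m+1) * (Real.exp (-(↑(m+1):ℝ)*s) *
            ∏ i ∈ range (m+1), (1 + (i:ℝ)*(Real.exp s - 1)/(N:ℝ))) := by
          have hE2 : Real.exp (-(↑(m+1):ℝ)*s) = Real.exp (-(m:ℝ)*s) * Real.exp (-s) := by
            rw [← Real.exp_add]; push_cast; ring_nf
          rw [Finset.prod_range_succ, pow_succ, hE2]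
          push_cast
          ring
open MeasureTheory ProbabilityTheory Finset

section
variable {Ω : Type} [MeasurableSpace Ω] (μ : Measure Ω) [IsProbabilityMeasure μ]
  {N m : ℕ} (v : Fin m → Ω → Fin N)

lemma map_point (hN : 1 ≤ N) (hmeas : ∀ i, Measurable (v i))
    (hunif : ∀ (i : Fin m) (a : Fin N), μ {ω | v i ω = a} = (1 : ENNReal) / N)
    (hindep : iIndepFun v μ)
    (f : Fin m → Fin N) :
    μ.map (fun ω i => v i ω) {f} = (1 / (N : ENNReal)) ^ m := by
  have hV : Measurable (fun ω i => v i ω) := measurable_pi_lambda _ hmeas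
  rw [Measure.map_apply hV (measurableSet_singleton f)]
  have hpre : (fun ω i => v i ω) ⁻¹' {f} = ⋂ i, v i ⁻¹' {f i} := by
    ext ω
    simp [funext_iff, Set.mem_iInter, eq_comm]
  rw [hpre, hindep.meas_iInter (fun i => ⟨{f i}, measurableSet_singleton _, rfl⟩)]
  have : ∀ i : Fin m, μ (v i ⁻¹' {f i}) = 1 / (N : ENNReal) := by
    intro i
    have := hunif i (f i)
    simpa [Set.preimage, Set.mem_singleton_iff] using this
  simp [this, Finset.prod_const]

lemma integral_eq_sum (hN : 1 ≤ N) (hmeas : ∀ i, Measurable (v i))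
    (hunif : ∀ (i : Fin m) (a : Fin N), μ {ω | v i ω = a} = (1 : ENNReal) / N)
    (hindep : iIndepFun v μ)
    (g : (Fin m → Fin N) → ℝ) :
    ∫ ω, g (fun i => v i ω) ∂μ = (1 / (N : ℝ)) ^ m * ∑ f : Fin m → Fin N, g f := by
  have hV : Measurable (fun ω i => v i ω) := measurable_pi_lambda _ hmeas
  have : IsProbabilityMeasure (μ.map (fun ω i => v i ω)) :=
    Measure.isProbabilityMeasure_map hV.aemeasurable
  rw [show (∫ ω, g (fun i => v i ω) ∂μ) = ∫ x, g x ∂(μ.map (fun ω i => v i ω)) from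
    (integral_map hV.aemeasurable (measurable_of_finite g).aestronglyMeasurable).symm,
    integral_fintype (Integrable.of_finite)]
  have hN0 : (N : ENNReal) ≠ 0 := Nat.cast_ne_zero.mpr (by omega)
  rw [Finset.mul_sum]
  refine Finset.sum_congr rfl (fun f _ => ?_)
  rw [Measure.real_def, map_point μ v hN hmeas hunif hindep f]
  rw [smul_eq_mul]
  congr 1
  rw [ENNReal.toReal_pow, ENNReal.toReal_div]
  simp

lemma integrable_comp (hmeas : ∀ i, Measurable (v i)) (g : (Fin m → Fin N) → ℝ) :
    Integrable (fun ω => g (fun i => v i ω)) μ := by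
  have hV : Measurable (fun ω i => v i ω) := measurable_pi_lambda _ hmeas
  have : IsProbabilityMeasure (μ.map (fun ω i => v i ω)) :=
    Measure.isProbabilityMeasure_map hV.aemeasurable
  exact (integrable_map_measure (measurable_of_finite g).aestronglyMeasurable
    hV.aemeasurable).mp (Integrable.of_finite)

end
open Finset

lemma prod_le_exp (m : ℕ) (K t : ℝ) (hK : 1 ≤ K) (ht : 0 ≤ t) :
    ∏ i ∈ range m, (1 + (i:ℝ) * t / K) ≤ Real.exp ((m:ℝ) * ((m:ℝ) - 1) / 2 * t / K) := by
  have hsum : (∑ i ∈ range m, (i:ℝ)) = (m:ℝ) * ((m:ℝ) - 1) / 2 := by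
    induction m with
    | zero => simp
    | succ m ih => rw [Finset.sum_range_succ, ih]; push_cast; ring
  calc ∏ i ∈ range m, (1 + (i:ℝ) * t / K)
      ≤ ∏ i ∈ range m, Real.exp ((i:ℝ) * t / K) := by
        apply Finset.prod_le_prod
        · intro i _; positivity
        · intro i _; exact Real.add_one_le_exp _ |>.trans_eq' (by ring_nf)
    _ = Real.exp (∑ i ∈ range m, (i:ℝ) * t / K) := (Real.exp_sum _ _).symm
    _ = Real.exp ((m:ℝ) * ((m:ℝ) - 1) / 2 * t / K) := by
        rw [← Finset.sum_div, ← Finset.sum_mul, hsum]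

lemma key_ineq (m n j : ℝ) (hm : 2 ≤ m) (hn : 2 ≤ n) (hj1 : 1 ≤ j) (hjm : j ≤ m) :
    2 * j * (m - n) ≤ m ^ 2 * (m - 1) := by
  rcases le_total m n with h | h
  · nlinarith
  · have t1 : 0 ≤ (m - j) * (m - n) := mul_nonneg (by linarith) (by linarith)
    have t2 : 0 ≤ m * (n - 1) := mul_nonneg (by linarith) (by linarith)
    have t3 : 0 ≤ (m - 2) * m * (m - 1) :=
      mul_nonneg (mul_nonneg (by linarith) (by linarith)) (by linarith)
    nlinarith [t1, t2, t3]

lemma tail_calc (n m j : ℕ) (hn : 2 ≤ n) (hj1 : 1 ≤ j) (hjm : j ≤ m) (P : ℝ)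
    (hP0 : 0 ≤ P) (hP1 : P ≤ 1)
    (hbound : ∀ s : ℝ, 0 < s → P ≤ Real.exp (-(j:ℝ) * s) *
      ∏ i ∈ range m, (1 + (i:ℝ) * (Real.exp s - 1) / ((n:ℝ) - 1))) :
    P ≤ (Real.exp 1 * (m:ℝ) ^ 2 / (2 * (j:ℝ) * n)) ^ j := by
  obtain ⟨K, hKdef⟩ : ∃ K : ℝ, K = (n:ℝ) - 1 := ⟨_, rfl⟩
  have hnR : (2:ℝ) ≤ (n:ℝ) := by exact_mod_cast hn
  have hK : 1 ≤ K := by rw [hKdef]; linarith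
  have hK0 : 0 < K := by linarith
  have hjR : (1:ℝ) ≤ (j:ℝ) := by exact_mod_cast hj1
  have hjmR : (j:ℝ) ≤ (m:ℝ) := by exact_mod_cast hjm
  have hmR : (1:ℝ) ≤ (m:ℝ) := le_trans hjR hjmR
  have he1 : (2:ℝ) ≤ Real.exp 1 := by
    have := Real.add_one_le_exp (1:ℝ); linarith
  simp only [← hKdef] at hbound
  obtain ⟨c, hcdef⟩ : ∃ c : ℝ, c = (m:ℝ) * ((m:ℝ) - 1) / (2 * K) := ⟨_, rfl⟩
  have hcK : c * (2 * K) = (m:ℝ) * ((m:ℝ) - 1) := by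
    rw [hcdef]; field_simp
  have hc0 : 0 ≤ c := by
    rw [hcdef]
    apply div_nonneg (mul_nonneg (by linarith) (by linarith)) (by linarith)
  have hb2 : ∀ s : ℝ, 0 < s → P ≤ Real.exp (-(j:ℝ) * s + c * (Real.exp s - 1)) := by
    intro s hs
    have ht : (0:ℝ) ≤ Real.exp s - 1 := by
      have := Real.add_one_le_exp s; linarith
    calc P ≤ Real.exp (-(j:ℝ) * s) *
        ∏ i ∈ range m, (1 + (i:ℝ) * (Real.exp s - 1) / K) := hbound s hs
      _ ≤ Real.exp (-(j:ℝ) * s) *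
          Real.exp ((m:ℝ) * ((m:ℝ) - 1) / 2 * (Real.exp s - 1) / K) := by
          exact mul_le_mul_of_nonneg_left (prod_le_exp m K _ hK ht) (Real.exp_pos _).le
      _ = Real.exp (-(j:ℝ) * s + c * (Real.exp s - 1)) := by
          rw [← Real.exp_add]
          congr 1
          rw [hcdef]
          field_simp
  have hjn0 : (0:ℝ) < 2 * (j:ℝ) * n := by positivity
  by_cases hjc : (j:ℝ) ≤ c
  · have hn2K : (n:ℝ) ≤ 2 * K := by rw [hKdef]; linarith
    have hbase : (1:ℝ) ≤ Real.exp 1 * (m:ℝ) ^ 2 / (2 * (j:ℝ) * n) := by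
      rw [le_div_iff₀ hjn0]
      have h2 : 2 * c * n ≤ 2 * (m:ℝ) * ((m:ℝ) - 1) := by nlinarith
      nlinarith
    calc P ≤ 1 := hP1
      _ ≤ (Real.exp 1 * (m:ℝ) ^ 2 / (2 * (j:ℝ) * n)) ^ j := one_le_pow₀ hbase
  · push_neg at hjc
    by_cases hc : c = 0
    · have hT0 : (0:ℝ) < (Real.exp 1 * (m:ℝ) ^ 2 / (2 * (j:ℝ) * n)) ^ j := by positivity
      set T := (Real.exp 1 * (m:ℝ) ^ 2 / (2 * (j:ℝ) * n)) ^ j with hT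
      have hs0 : (0:ℝ) < max 1 (-Real.log T) := lt_of_lt_of_le one_pos (le_max_left _ _)
      have hb := hb2 _ hs0
      rw [hc] at hb
      simp only [zero_mul, add_zero] at hb
      refine hb.trans ?_
      have h1 : -(j:ℝ) * max 1 (-Real.log T) ≤ -(max 1 (-Real.log T)) := by nlinarith
      have h2 : -(max 1 (-Real.log T)) ≤ Real.log T := by
        have := le_max_right 1 (-Real.log T); linarith
      calc Real.exp (-(j:ℝ) * max 1 (-Real.log T))
          ≤ Real.exp (Real.log T) := Real.exp_le_exp.2 (by linarith)
        _ = T := Real.exp_log hT0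
    · have hc0' : 0 < c := lt_of_le_of_ne hc0 (Ne.symm hc)
      have hm2 : (2:ℝ) ≤ (m:ℝ) := by
        have h1 : (1:ℝ) < (m:ℝ) := by nlinarith
        have : 1 < m := by exact_mod_cast h1
        exact_mod_cast this
      -- choose s = log (j / c)
      have hjcd : 1 < (j:ℝ) / c := (one_lt_div hc0').2 hjc
      set s : ℝ := Real.log ((j:ℝ) / c) with hsdef
      have hs0 : 0 < s := Real.log_pos hjcd
      have hexps : Real.exp s = (j:ℝ) / c := Real.exp_log (by positivity)
      have hb := hb2 s hs0
      have harg : -(j:ℝ) * s + c * (Real.exp s - 1) = (j:ℝ) * (-s) + ((j:ℝ) - c) := by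
        rw [hexps]; field_simp
      rw [harg, Real.exp_add, Real.exp_nat_mul, Real.exp_neg, hexps] at hb
      have hinv : ((j:ℝ) / c)⁻¹ = c / (j:ℝ) := by
        rw [inv_div]
      rw [hinv] at hb
      -- now P ≤ (c/j)^j * exp (j - c)
      have hexpj : Real.exp ((j:ℝ) - c) = (Real.exp 1) ^ j * Real.exp (-c) := by
        rw [← Real.exp_nat_mul, ← Real.exp_add]
        congr 1
        ring
      rw [hexpj] at hb
      obtain ⟨x, hxdef⟩ : ∃ x : ℝ, x = ((m:ℝ) - 1) * n / ((m:ℝ) * K) := ⟨_, rfl⟩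
      have hx0 : 0 ≤ x := by
        rw [hxdef]
        apply div_nonneg (mul_nonneg (by linarith) (by linarith)) (by positivity)
      have hsplit : c / (j:ℝ) = (m:ℝ)^2 / (2 * (j:ℝ) * n) * x := by
        rw [hxdef, hcdef]
        field_simp
      have hxexp : x ^ j ≤ Real.exp c := by
        have key : 2 * (j:ℝ) * ((m:ℝ) - (n:ℝ)) ≤ (m:ℝ)^2 * ((m:ℝ) - 1) :=
          key_ineq _ _ _ hm2 hnR hjR hjmR
        have hm0 : (m:ℝ) ≠ 0 := by linarith
        have hn1 : (n:ℝ) - 1 ≠ 0 := by linarith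
        have hx1 : (j:ℝ) * (x - 1) ≤ c := by
          have hid : c - (j:ℝ)*(x-1)
              = ((m:ℝ)^2*((m:ℝ)-1) - 2*(j:ℝ)*((m:ℝ)-(n:ℝ))) / (2*(m:ℝ)*K) := by
            rw [hxdef, hcdef, hKdef]
            field_simp
            ring
          have h0 : 0 ≤ c - (j:ℝ)*(x-1) := by
            rw [hid]
            apply div_nonneg (by linarith [key]) (by positivity)
          linarith
        calc x ^ j ≤ (Real.exp (x - 1)) ^ j :=
              pow_le_pow_left₀ hx0 (by linarith [Real.add_one_le_exp (x-1)]) j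
          _ = Real.exp ((j:ℝ) * (x - 1)) := (Real.exp_nat_mul _ _).symm
          _ ≤ Real.exp c := Real.exp_le_exp.2 hx1
      -- combine
      have hTsplit : (Real.exp 1 * (m:ℝ) ^ 2 / (2 * (j:ℝ) * n)) ^ j
          = (Real.exp 1) ^ j * ((m:ℝ)^2 / (2 * (j:ℝ) * n)) ^ j := by
        rw [← mul_pow, mul_div_assoc]
      rw [hTsplit]
      refine hb.trans ?_
      have hfin : x ^ j * Real.exp (-c) ≤ 1 := by
        rw [Real.exp_neg]
        rw [mul_inv_le_iff₀ (Real.exp_pos c)]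
        simpa using hxexp
      have heq : (c / (j:ℝ))^j * ((Real.exp 1)^j * Real.exp (-c))
          = (Real.exp 1)^j * ((m:ℝ)^2/(2*(j:ℝ)*n))^j * (x^j * Real.exp (-c)) := by
        rw [hsplit, mul_pow]; ring
      rw [heq]
      calc (Real.exp 1)^j * ((m:ℝ)^2/(2*(j:ℝ)*n))^j * (x^j * Real.exp (-c))
          ≤ (Real.exp 1)^j * ((m:ℝ)^2/(2*(j:ℝ)*n))^j * 1 :=
            mul_le_mul_of_nonneg_left hfin (by positivity)
        _ = (Real.exp 1)^j * ((m:ℝ)^2/(2*(j:ℝ)*n))^j := mul_one _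

/-- Coupon-collector lower tail.  Let `v_1, …, v_m` be independent uniform samples from a set
of `n − 1` elements and let `R_m = {v_1, …, v_m}` be the set of distinct values.  Then for
every `s > 0`, `E[exp(−s |R_m|)] ≤ e^{−ms} ∏_{i=1}^{m−1} (1 + i (e^s − 1)/(n−1))`, and
consequently `Pr[|R_m| ≤ m − j] ≤ (e m² / (2 j n))^j` for every `1 ≤ j ≤ m`. -/
theorem stmt18 {Ω : Type} [MeasurableSpace Ω] (μ : Measure Ω) [IsProbabilityMeasure μ]
    (n m : ℕ) (hn : 2 ≤ n)
    (v : Fin m → Ω → Fin (n - 1))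
    (hmeas : ∀ i, Measurable (v i))
    (hunif : ∀ (i : Fin m) (a : Fin (n - 1)),
      μ {ω | v i ω = a} = (1 : ENNReal) / (n - 1 : ℕ))
    (hindep : iIndepFun v μ) :
    (∀ s : ℝ, 0 < s →
      ∫ ω, Real.exp (-s * ((Finset.univ.image (fun i => v i ω)).card : ℝ)) ∂μ ≤
        Real.exp (-(m : ℝ) * s) *
          ∏ i ∈ Finset.range m, (1 + (i : ℝ) * (Real.exp s - 1) / ((n : ℝ) - 1))) ∧
    (∀ j : ℕ, 1 ≤ j → j ≤ m →
      (μ {ω | ((Finset.univ.image (fun i => v i ω)).card : ℝ) ≤ (m : ℝ) - j}).toReal ≤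
        (Real.exp 1 * (m : ℝ) ^ 2 / (2 * (j : ℝ) * n)) ^ j) := by
  have hN1 : 1 ≤ n - 1 := by omega
  have hcast : (((n - 1 : ℕ) : ℝ)) = (n : ℝ) - 1 := by
    have : 1 ≤ n := by omega
    push_cast [this]
    ring
  have hNr1 : (1:ℝ) ≤ ((n - 1 : ℕ) : ℝ) := by exact_mod_cast hN1
  have hNr0 : ((n - 1 : ℕ) : ℝ) ≠ 0 := by linarith
  have part1 : ∀ s : ℝ, 0 < s →
      ∫ ω, Real.exp (-s * ((Finset.univ.image (fun i => v i ω)).card : ℝ)) ∂μ ≤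
        Real.exp (-(m : ℝ) * s) *
          ∏ i ∈ Finset.range m, (1 + (i : ℝ) * (Real.exp s - 1) / ((n : ℝ) - 1)) := by
    intro s hs
    have h1 : (∫ ω, Real.exp (-s * ((Finset.univ.image (fun i => v i ω)).card : ℝ)) ∂μ)
        = (1 / ((n - 1 : ℕ) : ℝ)) ^ m *
          ∑ f : Fin m → Fin (n - 1), Real.exp (-s * ((univ.image f).card : ℝ)) :=
      integral_eq_sum μ v hN1 hmeas hunif hindep (fun f => Real.exp (-s * ((univ.image f).card : ℝ)))
    rw [h1]
    calc (1 / ((n - 1 : ℕ) : ℝ)) ^ m *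
          ∑ f : Fin m → Fin (n - 1), Real.exp (-s * ((univ.image f).card : ℝ))
        ≤ (1 / ((n - 1 : ℕ) : ℝ)) ^ m * (((n - 1 : ℕ) : ℝ) ^ m * (Real.exp (-(m : ℝ) * s) *
            ∏ i ∈ range m, (1 + (i : ℝ) * (Real.exp s - 1) / ((n - 1 : ℕ) : ℝ)))) :=
          mul_le_mul_of_nonneg_left (key_sum (n - 1) hN1 s hs.le m) (by positivity)
      _ = Real.exp (-(m : ℝ) * s) *
            ∏ i ∈ range m, (1 + (i : ℝ) * (Real.exp s - 1) / ((n - 1 : ℕ) : ℝ)) := by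
          rw [one_div, inv_pow, ← mul_assoc, inv_mul_cancel₀ (pow_ne_zero _ hNr0), one_mul]
      _ = Real.exp (-(m : ℝ) * s) *
            ∏ i ∈ range m, (1 + (i : ℝ) * (Real.exp s - 1) / ((n : ℝ) - 1)) := by
          rw [hcast]
  refine ⟨part1, ?_⟩
  intro j hj1 hjm
  set A := {ω | ((Finset.univ.image (fun i => v i ω)).card : ℝ) ≤ (m : ℝ) - j} with hA
  refine tail_calc n m j hn hj1 hjm _ ENNReal.toReal_nonneg ?_ ?_
  · have := prob_le_one (μ := μ) (s := A)
    calc (μ A).toReal ≤ (1 : ENNReal).toReal := ENNReal.toReal_mono (by simp) this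
      _ = 1 := by simp
  · intro s hs
    set ε : ℝ := Real.exp (-s * ((m : ℝ) - j)) with hε
    have hε0 : 0 < ε := Real.exp_pos _
    have hInt : Integrable
        (fun ω => Real.exp (-s * ((Finset.univ.image (fun i => v i ω)).card : ℝ))) μ :=
      integrable_comp μ v hmeas (fun f => Real.exp (-s * ((univ.image f).card : ℝ)))
    have hMar := mul_meas_ge_le_integral_of_nonneg
      (ae_of_all μ (fun ω => (Real.exp_pos _).le)) hInt ε
    have hsub : A ⊆ {ω | ε ≤ Real.exp
        (-s * ((Finset.univ.image (fun i => v i ω)).card : ℝ))} := by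
      intro ω hω
      have hc : ((Finset.univ.image (fun i => v i ω)).card : ℝ) ≤ (m : ℝ) - j := hω
      have : -s * ((m : ℝ) - j) ≤ -s * ((Finset.univ.image (fun i => v i ω)).card : ℝ) := by
        nlinarith
      exact Real.exp_le_exp.2 this
    have hmono : (μ A).toReal ≤
        (μ {ω | ε ≤ Real.exp
          (-s * ((Finset.univ.image (fun i => v i ω)).card : ℝ))}).toReal :=
      ENNReal.toReal_mono (measure_ne_top μ _) (measure_mono hsub)
    have hchain : ε * (μ A).toReal ≤ Real.exp (-(m : ℝ) * s) *
        ∏ i ∈ range m, (1 + (i : ℝ) * (Real.exp s - 1) / ((n : ℝ) - 1)) :=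
      le_trans (mul_le_mul_of_nonneg_left hmono hε0.le) (hMar.trans (part1 s hs))
    have hEinv : ε⁻¹ = Real.exp (s * ((m : ℝ) - j)) := by
      rw [hε, ← Real.exp_neg]
      congr 1
      ring
    have hfin : (μ A).toReal ≤ ε⁻¹ * (Real.exp (-(m : ℝ) * s) *
        ∏ i ∈ range m, (1 + (i : ℝ) * (Real.exp s - 1) / ((n : ℝ) - 1))) := by
      rw [le_inv_mul_iff₀ hε0]
      exact hchain
    refine hfin.trans (le_of_eq ?_)
    rw [hEinv, ← mul_assoc, ← Real.exp_add]
    congr 2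
    ring
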